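/- arXiv:2410.22303 — 2 statements merged into one kernel-verified Lean document; each statement's English description precedes it below -/
import Mathlib

section
/- Fix integers n ≥ 1, a statistical parameter κ_s ≥ 0, and let Δ = 2^{κ_s}·n. Suppose x₁,...,xₙ are nonnegative integers, r₁,...,rₙ ∈ {0,...,2^{κ_s}−1}, and e' is an integer with 0 ≤ e' ≤ n−1. Let X̄ = Δ·Σᵢ xᵢ + Σᵢ rᵢ + n − e'. Then ⌈X̄/Δ⌉ = Σᵢ xᵢ + 1. -/
/-- Correctness of the OPA_LWR decoder: with `Δ = 2^κs * n`, blinding terms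
`rᵢ < 2^κs`, and error `e' ≤ n - 1`, we have `⌈X̄/Δ⌉ = Σ xᵢ + 1` where
`X̄ = Δ·Σ xᵢ + Σ rᵢ + n − e'`. -/
theorem opa_lwr_decode_correct (n κs : ℕ) (hn : 1 ≤ n) (x r : Fin n → ℕ)
    (hr : ∀ i, r i < 2 ^ κs) (e' : ℕ) (he' : e' ≤ n - 1) :
    ⌈((((2 ^ κs * n : ℕ) : ℤ) * (∑ i, (x i : ℤ)) + (∑ i, (r i : ℤ))
        + (n : ℤ) - (e' : ℤ) : ℤ) : ℚ) / ((2 ^ κs * n : ℕ) : ℚ)⌉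
      = (∑ i, (x i : ℤ)) + 1 := by
  set Δ : ℤ := ((2 ^ κs * n : ℕ) : ℤ) with hΔ
  set S : ℤ := ∑ i, (x i : ℤ) with hS
  set t : ℤ := (∑ i, (r i : ℤ)) + (n : ℤ) - (e' : ℤ) with ht
  have hΔpos : (0 : ℤ) < Δ := by
    have : 0 < 2 ^ κs * n := Nat.mul_pos (Nat.pow_pos (by norm_num)) hn
    rw [hΔ]; exact_mod_cast this
  have hΔQ : (0 : ℚ) < ((2 ^ κs * n : ℕ) : ℚ) := by rw [hΔ] at hΔpos; exact_mod_cast hΔpos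
  have he'n : (e' : ℤ) ≤ (n : ℤ) - 1 := by
    have : (e' : ℤ) ≤ ((n - 1 : ℕ) : ℤ) := by exact_mod_cast he'
    omega
  have htpos : 0 < t := by
    have hrsum : 0 ≤ ∑ i, (r i : ℤ) :=
      Finset.sum_nonneg fun i _ => Int.natCast_nonneg _
    omega
  have htle : t ≤ Δ := by
    have hrsum : (∑ i, (r i : ℤ)) ≤ ∑ i : Fin n, ((2 ^ κs : ℤ) - 1) := by
      apply Finset.sum_le_sum
      intro i _
      have := hr i
      have : (r i : ℤ) < (2 ^ κs : ℕ) := by exact_mod_cast this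
      push_cast at this ⊢
      omega
    simp only [Finset.sum_const, Finset.card_univ, Fintype.card_fin, nsmul_eq_mul] at hrsum
    have : Δ = (n : ℤ) * 2 ^ κs := by rw [hΔ]; push_cast; ring
    rw [this]
    have : (n : ℤ) * ((2 : ℤ) ^ κs - 1) = (n : ℤ) * 2 ^ κs - n := by ring
    omega
  rw [Int.ceil_eq_iff]
  constructor
  · rw [lt_div_iff₀ hΔQ]
    push_cast
    have : (Δ : ℚ) * S + t - Δ * 1 ≥ Δ * S + t - Δ * 1 := le_refl _
    have h1 : (0:ℚ) < (t:ℚ) := by exact_mod_cast htpos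
    push_cast [ht, hΔ] at h1 ⊢
    nlinarith
  · rw [div_le_iff₀ hΔQ]
    push_cast
    have h1 : (t:ℚ) ≤ (Δ:ℚ) := by exact_mod_cast htle
    push_cast [ht, hΔ] at h1 ⊢
    nlinarith
end

section
/- (Shamir reconstruction over the integers with offset.) Let m ≥ 1, Δ = m!, and let f(X) = Δ·s + Σ_{i=1}^{r−1} rᵢ·Xⁱ ∈ ℤ[X] be a polynomial of degree at most r−1 with f(0) = Δ·s. For any set S ⊆ {1,...,m} with |S| = r, let Λᵢ = Δ·∏_{j∈S, j≠i} j/(j−i) for i ∈ S. Then Σ_{i∈S} Λᵢ·f(i) = Δ²·s. -/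
open Nat Polynomial

/-- Shamir reconstruction over the integers with offset `Δ = m!`:
if `f ∈ ℤ[X]` has degree ≤ r−1 and constant coefficient `Δ·s`, then for any
`S ⊆ {1,…,m}` of size `r`, `Σ_{i∈S} Λᵢ·f(i) = Δ²·s` where
`Λᵢ = Δ·∏_{j∈S, j≠i} j/(j−i)`. -/
theorem integer_shamir_reconstruct (m r : ℕ) (hm : 1 ≤ m) (hr : 1 ≤ r) (s : ℤ)
    (f : Polynomial ℤ) (hdeg : f.natDegree ≤ r - 1)
    (hf0 : f.coeff 0 = (m ! : ℤ) * s)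
    (S : Finset ℕ) (hS : S ⊆ Finset.Icc 1 m) (hcard : S.card = r) :
    ∑ i ∈ S, ((m ! : ℚ) * ∏ j ∈ S.erase i, (j : ℚ) / ((j : ℚ) - (i : ℚ)))
        * ((f.eval (i : ℤ) : ℤ) : ℚ)
      = ((m ! : ℚ)) ^ 2 * (s : ℚ) := by
  set g : Polynomial ℚ := f.map (Int.castRingHom ℚ) with hg
  have hvinj : Set.InjOn (fun n : ℕ => (n : ℚ)) ↑S :=
    fun a _ b _ h => Nat.cast_injective h
  have hdegg : g.degree < S.card := by
    rw [hcard]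
    calc g.degree ≤ f.degree := Polynomial.degree_map_le
      _ ≤ (f.natDegree : WithBot ℕ) := Polynomial.degree_le_natDegree
      _ < (r : WithBot ℕ) := by
          exact_mod_cast Nat.lt_of_le_of_lt hdeg (Nat.sub_lt hr Nat.one_pos)
  have key := Lagrange.eq_interpolate (f := g) hvinj hdegg
  have heval0 : g.eval 0 = ∑ i ∈ S, g.eval (i : ℚ) *
      (Lagrange.basis S (fun n : ℕ => (n : ℚ)) i).eval 0 := by
    conv_lhs => rw [key]
    simp [Lagrange.interpolate, Polynomial.eval_finset_sum, mul_comm]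
  have hbasis : ∀ i ∈ S, (Lagrange.basis S (fun n : ℕ => (n : ℚ)) i).eval 0
      = ∏ j ∈ S.erase i, (j : ℚ) / ((j : ℚ) - (i : ℚ)) := by
    intro i hi
    rw [Lagrange.basis, Polynomial.eval_prod]
    refine Finset.prod_congr rfl fun j hj => ?_
    have hji : (j : ℚ) ≠ (i : ℚ) := by
      exact_mod_cast fun h => (Finset.mem_erase.1 hj).1 (Nat.cast_injective h)
    rw [Lagrange.basisDivisor]
    simp only [Polynomial.eval_mul, Polynomial.eval_sub, Polynomial.eval_C, Polynomial.eval_X]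
    have h1 : ((i : ℚ) - j) ≠ 0 := sub_ne_zero.2 hji.symm
    have h2 : ((j : ℚ) - i) ≠ 0 := sub_ne_zero.2 hji
    field_simp
    ring
  have hge : ∀ i ∈ S, g.eval (i : ℚ) = ((f.eval (i : ℤ) : ℤ) : ℚ) := by
    intro i hi
    simp [hg, Polynomial.eval_map, Polynomial.eval₂_at_natCast]
  have hg0 : g.eval 0 = (m ! : ℚ) * s := by
    have : g.coeff 0 = ((f.coeff 0 : ℤ) : ℚ) := by simp [hg]
    rw [show g.eval 0 = g.coeff 0 from (Polynomial.coeff_zero_eq_eval_zero g).symm,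
      this, hf0]; push_cast; ring
  calc ∑ i ∈ S, ((m ! : ℚ) * ∏ j ∈ S.erase i, (j : ℚ) / ((j : ℚ) - (i : ℚ)))
        * ((f.eval (i : ℤ) : ℤ) : ℚ)
      = (m ! : ℚ) * ∑ i ∈ S, g.eval (i : ℚ) *
          (Lagrange.basis S (fun n : ℕ => (n : ℚ)) i).eval 0 := by
        rw [Finset.mul_sum]
        refine Finset.sum_congr rfl fun i hi => ?_
        rw [hbasis i hi, hge i hi]; ring
    _ = (m ! : ℚ) * g.eval 0 := by rw [heval0]
    _ = ((m ! : ℚ)) ^ 2 * (s : ℚ) := by rw [hg0]; ring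
end
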